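/- For any rooted plane tree T with n ≥ 1 edges, the number λ(T) of distinct rooted trees obtained from T by repeated tree rotation (equivalently, the period of T under rotation) is a divisor of 2n. -/

import Mathlib

/-- Rooted (ordered) plane trees: a root with a list of child subtrees. -/
inductive RTree where
  | node : List RTree → RTree

namespace RTree

mutual
/-- Number of edges of a rooted tree. -/
def edges : RTree → ℕ
  | .node cs => edgesF cs
/-- Number of edges of a forest, counting also the edges to the roots. -/
def edgesF : List RTree → ℕ
  | [] => 0
  | c :: cs => edges c + 1 + edgesF cs
end

/-- Tree rotation `ρ(1 u 0 v) = u 1 v 0`: the leftmost child of the root becomes the new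
root, and the old root (with its remaining children) is appended as its last child. -/
def rho : RTree → RTree
  | .node [] => .node []
  | .node (.node cs :: rest) => .node (cs ++ [.node rest])

mutual
/-- The list of vertices of a rooted tree, encoded as addresses (paths of child indices). -/
def addrs : RTree → List (List ℕ)
  | .node cs => [] :: addrsF 0 cs
def addrsF : ℕ → List RTree → List (List ℕ)
  | _, [] => []
  | i, c :: cs => (addrs c).map (i :: ·) ++ addrsF (i + 1) cs
end

/-- Length of the longest common prefix of two addresses. -/
def lcp : List ℕ → List ℕ → ℕ
  | a :: p, b :: q => if a = b then 1 + lcp p q else 0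
  | _, _ => 0

/-- Graph distance between two vertices, given by their addresses. -/
def adist (p q : List ℕ) : ℕ := p.length + q.length - 2 * lcp p q

/-- The potential of the vertex `p`: the sum of distances to all vertices of `t`. -/
def potential (t : RTree) (p : List ℕ) : ℕ := ((addrs t).map (adist p)).sum

/-- The potential `φ(t)` of the tree: the minimum vertex potential. -/
noncomputable def phiMin (t : RTree) : ℕ := sInf {m | ∃ p ∈ addrs t, potential t p = m}

/-- A centroid: a vertex of minimum potential. -/
def IsCentroid (t : RTree) (p : List ℕ) : Prop :=
  p ∈ addrs t ∧ potential t p = phiMin t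

/-- `λ(t)`: the rotation period of the rooted tree `t`, i.e. the number of distinct rooted
trees obtained from `t` by repeated rotation. -/
noncomputable def lam (t : RTree) : ℕ := sInf {i | 0 < i ∧ rho^[i] t = t}

end RTree


namespace RTree

lemma edgesF_cons' (c : RTree) (cs : List RTree) :
    edgesF (c :: cs) = edges c + 1 + edgesF cs := rfl

lemma rho_base (acc suf : List RTree) :
    rho^[2 * edgesF ([] : List RTree) + 1] (node (([] : List RTree) ++ node acc :: suf))
      = node (acc ++ [node (suf ++ ([] : List RTree))]) := by
  simp only [edgesF, Nat.mul_zero, Nat.zero_add, Function.iterate_one, List.nil_append,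
    List.append_nil]
  rfl

theorem rhoB (N : ℕ) : ∀ ds : List RTree, edgesF ds ≤ N → ∀ acc suf : List RTree,
    rho^[2 * edgesF ds + 1] (node (ds ++ node acc :: suf))
      = node (acc ++ [node (suf ++ ds)]) := by
  induction N with
  | zero =>
    intro ds h acc suf
    match ds with
    | [] => exact rho_base acc suf
    | c :: cs => simp [edgesF_cons'] at h
  | succ N ih =>
    intro ds h acc suf
    match ds with
    | [] => exact rho_base acc suf
    | node es :: ds' =>
      have he : edgesF (node es :: ds') = edgesF es + 1 + edgesF ds' := rfl
      have hes : edgesF es ≤ N := by omega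
      have hds' : edgesF ds' ≤ N := by omega
      have hsplit : 2 * edgesF (node es :: ds') + 1
          = ((2 * edgesF ds' + 1) + (2 * edgesF es + 1)) + 1 := by omega
      rw [hsplit, Function.iterate_succ_apply, Function.iterate_add_apply]
      have h1 : rho (node ((node es :: ds') ++ node acc :: suf))
          = node (es ++ node (ds' ++ node acc :: suf) :: []) := by
        show rho (node (node es :: (ds' ++ node acc :: suf))) = _
        rfl
      rw [h1, ih es hes (ds' ++ node acc :: suf) []]
      have h2 : (ds' ++ node acc :: suf) ++ [node ([] ++ es)]
          = ds' ++ node acc :: (suf ++ [node es]) := by simp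
      rw [h2, ih ds' hds' acc (suf ++ [node es])]
      simp

theorem rhoC : ∀ cs pre : List RTree,
    rho^[2 * edgesF cs] (node (cs ++ pre)) = node (pre ++ cs) := by
  intro cs
  induction cs with
  | nil => intro pre; simp [edgesF]
  | cons c cs' ih =>
    intro pre
    obtain ⟨es⟩ := c
    have hsplit : 2 * edgesF (node es :: cs')
        = (2 * edgesF cs' + (2 * edgesF es + 1)) + 1 := by
      have : edgesF (node es :: cs') = edgesF es + 1 + edgesF cs' := rfl
      omega
    rw [hsplit, Function.iterate_succ_apply, Function.iterate_add_apply]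
    have h1 : rho (node ((node es :: cs') ++ pre))
        = node (es ++ node (cs' ++ pre) :: []) := by
      show rho (node (node es :: (cs' ++ pre))) = _
      rfl
    rw [h1, rhoB (edgesF es) es le_rfl (cs' ++ pre) []]
    have h2 : (cs' ++ pre) ++ [node ([] ++ es)] = cs' ++ (pre ++ [node es]) := by simp
    rw [h2, ih (pre ++ [node es])]
    simp

theorem rho_iterate_two_mul (t : RTree) : rho^[2 * edges t] t = t := by
  obtain ⟨cs⟩ := t
  have := rhoC cs []
  simpa [edges] using this

end RTree

open RTree in
/-- For any rooted plane tree with `n ≥ 1` edges, the rotation period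
`λ(T)` divides `2n`. -/
theorem lam_dvd_two_mul (n : ℕ) (hn : 1 ≤ n) (t : RTree) (ht : t.edges = n) :
    lam t ∣ 2 * n := by
  have key : Function.IsPeriodicPt rho (2 * n) t := by
    have := rho_iterate_two_mul t
    rw [ht] at this
    exact this
  have hper : t ∈ Function.periodicPts rho := ⟨2 * n, by omega, key⟩
  have hpos := Function.minimalPeriod_pos_of_mem_periodicPts hper
  have heq : lam t = Function.minimalPeriod rho t := by
    apply le_antisymm
    · exact Nat.sInf_le ⟨hpos, Function.isPeriodicPt_minimalPeriod rho t⟩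
    · have hmem : lam t ∈ {i | 0 < i ∧ rho^[i] t = t} :=
        Nat.sInf_mem ⟨2 * n, by omega, key⟩
      exact Function.IsPeriodicPt.minimalPeriod_le hmem.1 hmem.2
  rw [heq]
  exact Function.IsPeriodicPt.minimalPeriod_dvd key
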